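/- arXiv:1807.09084 — 2 statements merged into one kernel-verified Lean document; each statement's English description precedes it below -/
import Mathlib

section
/- Let d ≥ 1 and let 𝖠 ⊆ M_d(ℝ) be compact and nonempty with a multicone (K_1,…,K_m) and transverse-defining vector w, and let Ω := {z ∈ ℂ^d : z ∈ ∪_{j=1}^m int(K_j^ℂ) and ⟨z,w⟩ = 1}. Then there exists a constant C > 0 such that for every A ∈ 𝒮(𝖠) and every z ∈ Ω one has C^{-1}·‖A‖ ≤ |⟨Az,w⟩| ≤ C·‖A‖, where ‖A‖ is the operator norm of A with respect to the Euclidean norm. -/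
open scoped BigOperators Pointwise

noncomputable section

/-- The Euclidean norm of a finitely-indexed vector (real or complex entries). -/
def enorm {ι : Type*} [Fintype ι] {E : Type*} [Norm E] (u : ι → E) : ℝ :=
  Real.sqrt (∑ i, ‖u i‖ ^ 2)

/-- The operator norm of a real matrix induced by the Euclidean norm. -/
def opNorm {ι : Type*} [Fintype ι] (A : Matrix ι ι ℝ) : ℝ :=
  sSup ((fun u : ι → ℝ => _root_.enorm (A.mulVec u)) '' {u : ι → ℝ | _root_.enorm u = 1})

/-- A multicone for a set of matrices (Definition 1.2). -/
def IsMulticone {ι : Type*} [Fintype ι] (S : Set (Matrix ι ι ℝ)) {m : ℕ}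
    (K : Fin m → Set (ι → ℝ)) (w : ι → ℝ) : Prop :=
  (∀ j, IsClosed (K j)) ∧ (∀ j, Convex ℝ (K j)) ∧ (∀ j, (interior (K j)).Nonempty) ∧
  (∀ j, ∀ c : ℝ, 0 ≤ c → ∀ u ∈ K j, c • u ∈ K j) ∧
  (∑ i, w i ^ 2 = 1) ∧
  (∀ u ∈ ⋃ j, K j, u ≠ 0 → 0 < ∑ i, u i * w i) ∧
  (∀ A ∈ S, ∀ j, ∃ ℓ, ∀ u ∈ K j, u ≠ 0 →
    A.mulVec u ∈ interior (K ℓ) ∨ -A.mulVec u ∈ interior (K ℓ)) ∧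
  (∀ j₁ j₂, j₁ ≠ j₂ → K j₁ ∩ K j₂ = {0})

/-- The set of matrices is multipositive if it admits a multicone. -/
def IsMultipositive {ι : Type*} [Fintype ι] (S : Set (Matrix ι ι ℝ)) : Prop :=
  ∃ (m : ℕ) (_ : 0 < m) (K : Fin m → Set (ι → ℝ)) (w : ι → ℝ), IsMulticone S K w

/-- The semigroup generated by a set of matrices. -/
def semigroupOf {ι : Type*} [Fintype ι] [DecidableEq ι] (S : Set (Matrix ι ι ℝ)) :
    Set (Matrix ι ι ℝ) :=
  {B | ∃ l : List (Matrix ι ι ℝ), l ≠ [] ∧ (∀ M ∈ l, M ∈ S) ∧ B = l.prod}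

/-- The complexification of a set in ℝ^ι. -/
def complexify {ι : Type*} (K : Set (ι → ℝ)) : Set (ι → ℂ) :=
  {z | ∃ (c : ℂ) (u v : ι → ℝ), u ∈ K ∧ v ∈ K ∧
    z = fun i => c * (((u i : ℂ) + (v i : ℂ)) + Complex.I * ((u i : ℂ) - (v i : ℂ)))}

/-- The action of a real matrix on complex vectors. -/
def mulVecC {ι : Type*} [Fintype ι] (A : Matrix ι ι ℝ) (z : ι → ℂ) : ι → ℂ :=
  (A.map (fun x : ℝ => (x : ℂ))).mulVec z

/-- An ℝ-cone: closed, convex, nonempty interior, positively homogeneous, proper. -/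
def IsRCone {ι : Type*} [Fintype ι] (K : Set (ι → ℝ)) : Prop :=
  IsClosed K ∧ Convex ℝ K ∧ (interior K).Nonempty ∧
  (∀ c : ℝ, 0 < c → c • K = K) ∧ K ∩ (-K) = {0}

end


namespace Stmt9Aux


open Matrix

variable {d : ℕ}

lemma enorm_eq_norm (u : Fin d → ℝ) : _root_.enorm u = ‖(WithLp.equiv 2 (Fin d → ℝ)).symm u‖ := by
  rw [EuclideanSpace.norm_eq]; rfl

lemma enorm_nonneg (u : Fin d → ℝ) : 0 ≤ _root_.enorm u := Real.sqrt_nonneg _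

lemma enorm_zero : _root_.enorm (0 : Fin d → ℝ) = 0 := by simp [_root_.enorm]

lemma enorm_add_le (u v : Fin d → ℝ) : _root_.enorm (u + v) ≤ _root_.enorm u + _root_.enorm v := by
  simp only [enorm_eq_norm]
  rw [show (WithLp.equiv 2 (Fin d → ℝ)).symm (u+v)
      = (WithLp.equiv 2 (Fin d → ℝ)).symm u + (WithLp.equiv 2 (Fin d → ℝ)).symm v from rfl]
  exact norm_add_le _ _

lemma enorm_neg (u : Fin d → ℝ) : _root_.enorm (-u) = _root_.enorm u := by
  simp [_root_.enorm, Pi.neg_apply]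

lemma enorm_sub_le (u v : Fin d → ℝ) : _root_.enorm (u - v) ≤ _root_.enorm u + _root_.enorm v := by
  rw [sub_eq_add_neg]
  calc _root_.enorm (u + -v) ≤ _root_.enorm u + _root_.enorm (-v) := enorm_add_le _ _
  _ = _root_.enorm u + _root_.enorm v := by rw [enorm_neg]

lemma enorm_smul (c : ℝ) (u : Fin d → ℝ) : _root_.enorm (c • u) = |c| * _root_.enorm u := by
  simp only [enorm_eq_norm]
  rw [show (WithLp.equiv 2 (Fin d → ℝ)).symm (c • u)
      = c • (WithLp.equiv 2 (Fin d → ℝ)).symm u from rfl]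
  rw [norm_smul]; simp [Real.norm_eq_abs]

lemma enorm_eq_zero {u : Fin d → ℝ} : _root_.enorm u = 0 ↔ u = 0 := by
  simp only [enorm_eq_norm]
  rw [norm_eq_zero]
  exact ⟨fun h => congrArg (WithLp.equiv 2 (Fin d → ℝ)) h, fun h => by rw [h]; rfl⟩

lemma enorm_pos {u : Fin d → ℝ} (h : u ≠ 0) : 0 < _root_.enorm u :=
  lt_of_le_of_ne (enorm_nonneg u) (fun h' => h (enorm_eq_zero.1 h'.symm))

lemma ip_cs (u v : Fin d → ℝ) : |∑ i, u i * v i| ≤ _root_.enorm u * _root_.enorm v := by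
  have h : (∑ i, u i * v i)
      = inner ℝ ((WithLp.equiv 2 (Fin d → ℝ)).symm u) ((WithLp.equiv 2 (Fin d → ℝ)).symm v) := by
    rw [PiLp.inner_apply]; simp [RCLike.inner_apply, mul_comm]
  rw [h, enorm_eq_norm, enorm_eq_norm]
  exact abs_real_inner_le_norm _ _

lemma coord_le_enorm (u : Fin d → ℝ) (i : Fin d) : |u i| ≤ _root_.enorm u := by
  rw [← Real.sqrt_sq_eq_abs]
  apply Real.sqrt_le_sqrt
  have := Finset.single_le_sum (f := fun j => ‖u j‖ ^ 2) (fun j _ => by positivity)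
    (Finset.mem_univ i)
  simpa [Real.norm_eq_abs, sq_abs] using this

lemma pinorm_le_enorm (u : Fin d → ℝ) : ‖u‖ ≤ _root_.enorm u := by
  rcases isEmpty_or_nonempty (Fin d) with h | h
  · have : u = 0 := funext fun i => isEmptyElim i
    simp [this, enorm_zero]
  · refine (pi_norm_le_iff_of_nonneg (enorm_nonneg u)).2 fun i => ?_
    rw [Real.norm_eq_abs]; exact coord_le_enorm u i

lemma enorm_mono {x y : Fin d → ℝ} (h : ∀ i, |x i| ≤ |y i|) : _root_.enorm x ≤ _root_.enorm y := by
  apply Real.sqrt_le_sqrt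
  apply Finset.sum_le_sum
  intro i _
  simp only [Real.norm_eq_abs]
  exact pow_le_pow_left₀ (abs_nonneg _) (h i) 2

lemma enorm_w_one {w : Fin d → ℝ} (hw : ∑ i, w i ^ 2 = 1) : _root_.enorm w = 1 := by
  simp only [_root_.enorm, Real.norm_eq_abs, sq_abs, hw, Real.sqrt_one]

-- inner product with w helpers
lemma ip_add (x y w : Fin d → ℝ) :
    ∑ i, (x + y) i * w i = (∑ i, x i * w i) + ∑ i, y i * w i := by
  rw [← Finset.sum_add_distrib]
  exact Finset.sum_congr rfl fun i _ => by simp [add_mul]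

lemma ip_smul (c : ℝ) (x w : Fin d → ℝ) :
    ∑ i, (c • x) i * w i = c * ∑ i, x i * w i := by
  rw [Finset.mul_sum]
  exact Finset.sum_congr rfl fun i _ => by simp [mul_assoc]

lemma ip_neg (x w : Fin d → ℝ) : ∑ i, (-x) i * w i = -∑ i, x i * w i := by
  rw [← Finset.sum_neg_distrib]
  exact Finset.sum_congr rfl fun i _ => by simp

lemma ip_sub (x y w : Fin d → ℝ) :
    ∑ i, (x - y) i * w i = (∑ i, x i * w i) - ∑ i, y i * w i := by
  rw [sub_eq_add_neg, ip_add, ip_neg]; ring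

lemma abs_ip_le_enorm {w : Fin d → ℝ} (hw : ∑ i, w i ^ 2 = 1) (x : Fin d → ℝ) :
    |∑ i, x i * w i| ≤ _root_.enorm x := by
  have := ip_cs x w
  rwa [enorm_w_one hw, mul_one] at this

-- opNorm lemmas
lemma opNorm_bddAbove (A : Matrix (Fin d) (Fin d) ℝ) :
    BddAbove ((fun u : Fin d → ℝ => _root_.enorm (A.mulVec u)) '' {u : Fin d → ℝ | _root_.enorm u = 1}) := by
  refine ⟨_root_.enorm (fun i => ∑ j, |A i j|), ?_⟩
  rintro _ ⟨u, hu, rfl⟩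
  apply enorm_mono
  intro i
  simp only [Matrix.mulVec, dotProduct]
  calc |∑ j, A i j * u j| ≤ (∑ j, |A i j * u j|) := Finset.abs_sum_le_sum_abs _ _
  _ ≤ (∑ j, |A i j|) := by
      apply Finset.sum_le_sum; intro j _
      rw [abs_mul]
      have h1 : |u j| ≤ 1 := by rw [← hu]; exact coord_le_enorm u j
      have := mul_le_mul_of_nonneg_left h1 (abs_nonneg (A i j))
      simpa using this
  _ ≤ |(∑ j, |A i j|)| := le_abs_self _

lemma le_opNorm (A : Matrix (Fin d) (Fin d) ℝ) {u : Fin d → ℝ} (hu : _root_.enorm u = 1) :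
    _root_.enorm (A.mulVec u) ≤ opNorm A :=
  le_csSup (opNorm_bddAbove A) ⟨u, hu, rfl⟩

lemma opNorm_nonneg (A : Matrix (Fin d) (Fin d) ℝ) : 0 ≤ opNorm A := by
  apply Real.sSup_nonneg
  rintro _ ⟨u, hu, rfl⟩; exact enorm_nonneg _

lemma enorm_mulVec_le (A : Matrix (Fin d) (Fin d) ℝ) (u : Fin d → ℝ) :
    _root_.enorm (A.mulVec u) ≤ opNorm A * _root_.enorm u := by
  by_cases hu : u = 0
  · simp [hu, Matrix.mulVec_zero, enorm_zero]
  · have hpos := enorm_pos hu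
    set c := _root_.enorm u
    have hcu : _root_.enorm ((c⁻¹) • u) = 1 := by
      rw [enorm_smul, abs_of_nonneg (inv_nonneg.2 hpos.le)]
      field_simp
      rfl
    have h1 : _root_.enorm (A.mulVec (c⁻¹ • u)) ≤ opNorm A := le_opNorm A hcu
    rw [Matrix.mulVec_smul, enorm_smul, abs_of_nonneg (inv_nonneg.2 hpos.le)] at h1
    calc _root_.enorm (A.mulVec u) = c * (c⁻¹ * _root_.enorm (A.mulVec u)) := by field_simp
    _ ≤ c * opNorm A := mul_le_mul_of_nonneg_left h1 hpos.le
    _ = opNorm A * c := mul_comm _ _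

lemma opNorm_le {A : Matrix (Fin d) (Fin d) ℝ} {C : ℝ}
    (hex : ∃ u : Fin d → ℝ, _root_.enorm u = 1)
    (h : ∀ u : Fin d → ℝ, _root_.enorm u = 1 → _root_.enorm (A.mulVec u) ≤ C) : opNorm A ≤ C := by
  obtain ⟨u₀, hu₀⟩ := hex
  refine csSup_le ?_ ?_
  · exact ⟨_, ⟨u₀, hu₀, rfl⟩⟩
  · rintro _ ⟨u, hu, rfl⟩
    exact h u hu


-- ===================== cone basics =====================

def IsMulticone' {d m : ℕ} (S : Set (Matrix (Fin d) (Fin d) ℝ))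
    (K : Fin m → Set (Fin d → ℝ)) (w : Fin d → ℝ) : Prop :=
  (∀ j, IsClosed (K j)) ∧ (∀ j, Convex ℝ (K j)) ∧ (∀ j, (interior (K j)).Nonempty) ∧
  (∀ j, ∀ c : ℝ, 0 ≤ c → ∀ u ∈ K j, c • u ∈ K j) ∧
  (∑ i, w i ^ 2 = 1) ∧
  (∀ u ∈ ⋃ j, K j, u ≠ 0 → 0 < ∑ i, u i * w i) ∧
  (∀ A ∈ S, ∀ j, ∃ ℓ, ∀ u ∈ K j, u ≠ 0 →
    A.mulVec u ∈ interior (K ℓ) ∨ -A.mulVec u ∈ interior (K ℓ)) ∧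
  (∀ j₁ j₂, j₁ ≠ j₂ → K j₁ ∩ K j₂ = {0})

variable {m : ℕ} {S : Set (Matrix (Fin d) (Fin d) ℝ)} {K : Fin m → Set (Fin d → ℝ)}
  {w : Fin d → ℝ}

lemma w_ne_zero (hw : ∑ i, w i ^ 2 = 1) : w ≠ 0 := by
  intro h
  rw [h] at hw
  simp at hw

lemma zero_mem (hK : IsMulticone' S K w) (j : Fin m) : (0 : Fin d → ℝ) ∈ K j := by
  obtain ⟨x, hx⟩ := hK.2.2.1 j
  have := hK.2.2.2.1 j 0 le_rfl x (interior_subset hx)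
  simpa using this

lemma mem_K_pos (hK : IsMulticone' S K w) {j : Fin m} {u : Fin d → ℝ}
    (hu : u ∈ K j) (hne : u ≠ 0) : 0 < ∑ i, u i * w i :=
  hK.2.2.2.2.2.1 u (Set.mem_iUnion.2 ⟨j, hu⟩) hne

lemma zero_not_interior (hK : IsMulticone' S K w) (j : Fin m) :
    (0 : Fin d → ℝ) ∉ interior (K j) := by
  intro h0
  obtain ⟨ε, hε, hb⟩ := Metric.isOpen_iff.1 isOpen_interior 0 h0
  set u : Fin d → ℝ := -((ε/2) • w) with hu
  have hwn : _root_.enorm w = 1 := enorm_w_one hK.2.2.2.2.1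
  have hun : ‖u‖ ≤ ε/2 := by
    rw [norm_neg]
    calc ‖(ε/2) • w‖ ≤ _root_.enorm ((ε/2) • w) := pinorm_le_enorm _
    _ = |ε/2| * _root_.enorm w := enorm_smul _ _
    _ = ε/2 := by rw [hwn, abs_of_pos (by linarith)]; ring
  have humem : u ∈ K j := by
    apply interior_subset (hb _)
    rw [Metric.mem_ball, dist_zero_right]
    linarith
  have hune : u ≠ 0 := by
    intro h
    rw [hu, neg_eq_zero] at h
    rcases smul_eq_zero.1 h with h1 | h2
    · linarith
    · exact w_ne_zero hK.2.2.2.2.1 h2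
  have := mem_K_pos hK humem hune
  have hcalc : ∑ i, u i * w i = -(ε/2) := by
    have : ∀ i, u i * w i = -(ε/2) * (w i ^ 2) := by
      intro i; simp [hu, Pi.neg_apply, Pi.smul_apply, smul_eq_mul]; ring
    rw [Finset.sum_congr rfl fun i _ => this i, ← Finset.mul_sum, hK.2.2.2.2.1, mul_one]
  rw [hcalc] at this
  linarith

lemma ne_zero_of_interior (hK : IsMulticone' S K w) {j : Fin m} {u : Fin d → ℝ}
    (hu : u ∈ interior (K j)) : u ≠ 0 :=
  fun h => zero_not_interior hK j (h ▸ hu)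

lemma exists_ne_zero_mem (hK : IsMulticone' S K w) (j : Fin m) :
    ∃ x ∈ K j, x ≠ 0 := by
  obtain ⟨x, hx⟩ := hK.2.2.1 j
  exact ⟨x, interior_subset hx, ne_zero_of_interior hK hx⟩

lemma ip_nonneg_of_mem (hK : IsMulticone' S K w) {j : Fin m} {u : Fin d → ℝ}
    (hu : u ∈ K j) : 0 ≤ ∑ i, u i * w i := by
  by_cases h : u = 0
  · simp [h]
  · exact (mem_K_pos hK hu h).le

lemma continuous_enorm : Continuous (_root_.enorm : (Fin d → ℝ) → ℝ) := by
  unfold _root_.enorm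
  exact Real.continuous_sqrt.comp (continuous_finset_sum _ fun i _ =>
    ((continuous_apply i).norm.pow 2))

lemma exists_delta (hK : IsMulticone' S K w) (hm : 0 < m) :
    ∃ δ : ℝ, 0 < δ ∧ δ ≤ 1 ∧ ∀ j, ∀ u ∈ K j, δ * _root_.enorm u ≤ ∑ i, u i * w i := by
  classical
  set Se := {u : Fin d → ℝ | _root_.enorm u = 1} ∩ (⋃ j, K j) with hSe
  have hclosed : IsClosed Se :=
    (isClosed_eq continuous_enorm continuous_const).inter
      (isClosed_iUnion_of_finite fun j => hK.1 j)
  have hcpt : IsCompact Se := by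
    apply (isCompact_closedBall (0 : Fin d → ℝ) 1).of_isClosed_subset hclosed
    intro u hu
    rw [Metric.mem_closedBall, dist_zero_right]
    calc ‖u‖ ≤ _root_.enorm u := pinorm_le_enorm u
    _ = 1 := hu.1
  have hne : Se.Nonempty := by
    obtain ⟨x, hx, hxne⟩ := exists_ne_zero_mem hK ⟨0, hm⟩
    refine ⟨(_root_.enorm x)⁻¹ • x, ?_, Set.mem_iUnion.2 ⟨⟨0, hm⟩,
      hK.2.2.2.1 _ _ (inv_nonneg.2 (enorm_nonneg x)) x hx⟩⟩
    rw [Set.mem_setOf_eq, enorm_smul, abs_of_nonneg (inv_nonneg.2 (enorm_nonneg x))]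
    field_simp [(enorm_pos hxne).ne']
  have hcont : Continuous fun u : Fin d → ℝ => ∑ i, u i * w i :=
    continuous_finset_sum _ fun i _ => (continuous_apply i).mul continuous_const
  obtain ⟨u₀, hu₀, hmin⟩ := hcpt.exists_isMinOn hne hcont.continuousOn
  have hu₀ne : u₀ ≠ 0 := by
    intro h
    have h1 : _root_.enorm u₀ = 1 := hu₀.1
    rw [h, enorm_zero] at h1
    exact one_ne_zero h1.symm
  have hδpos : 0 < ∑ i, u₀ i * w i := hK.2.2.2.2.2.1 u₀ hu₀.2 hu₀ne
  refine ⟨∑ i, u₀ i * w i, hδpos, ?_, ?_⟩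
  · calc ∑ i, u₀ i * w i ≤ |∑ i, u₀ i * w i| := le_abs_self _
    _ ≤ _root_.enorm u₀ := abs_ip_le_enorm hK.2.2.2.2.1 u₀
    _ = 1 := hu₀.1
  · intro j u hu
    by_cases h : u = 0
    · simp [h, enorm_zero]
    · have hp := enorm_pos h
      have hmem : (_root_.enorm u)⁻¹ • u ∈ Se := by
        refine ⟨?_, Set.mem_iUnion.2 ⟨j, hK.2.2.2.1 j _ (inv_nonneg.2 hp.le) u hu⟩⟩
        rw [Set.mem_setOf_eq, enorm_smul, abs_of_nonneg (inv_nonneg.2 hp.le)]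
        field_simp
      have := hmin hmem
      rw [Set.mem_setOf_eq] at this
      simp only at this
      rw [ip_smul] at this
      -- δ ≤ (_root_.enorm u)⁻¹ * ∑ u i w i
      have h2 := mul_le_mul_of_nonneg_right this hp.le
      calc (∑ i, u₀ i * w i) * _root_.enorm u ≤ ((_root_.enorm u)⁻¹ * ∑ i, u i * w i) * _root_.enorm u := h2
      _ = ∑ i, u i * w i := by field_simp

-- ===================== MapsCones =====================

def MapsCones (K : Fin m → Set (Fin d → ℝ)) (A : Matrix (Fin d) (Fin d) ℝ) : Prop :=
  ∀ j, ∃ ℓ, ∃ ε : ℝ, (ε = 1 ∨ ε = -1) ∧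
    ∀ u ∈ K j, u ≠ 0 → ε • A.mulVec u ∈ interior (K ℓ)

lemma mapsCones_memK (hK : IsMulticone' S K w) {A : Matrix (Fin d) (Fin d) ℝ}
    (hA : MapsCones K A) (j : Fin m) :
    ∃ ℓ, ∃ ε : ℝ, (ε = 1 ∨ ε = -1) ∧
      (∀ u ∈ K j, ε • A.mulVec u ∈ K ℓ) ∧
      (∀ u ∈ K j, u ≠ 0 → ε • A.mulVec u ∈ interior (K ℓ)) := by
  obtain ⟨ℓ, ε, hε, h⟩ := hA j
  refine ⟨ℓ, ε, hε, fun u hu => ?_, h⟩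
  by_cases h0 : u = 0
  · simp [h0, Matrix.mulVec_zero, zero_mem hK ℓ]
  · exact interior_subset (h u hu h0)

lemma convex_K_sdiff (hK : IsMulticone' S K w) (j : Fin m) :
    Convex ℝ (K j \ {0}) := by
  intro x hx y hy a b ha hb hab
  refine ⟨hK.2.1 j hx.1 hy.1 ha hb hab, ?_⟩
  have hxp := mem_K_pos hK hx.1 (by simpa using hx.2)
  have hyp := mem_K_pos hK hy.1 (by simpa using hy.2)
  have hpos : 0 < ∑ i, (a • x + b • y) i * w i := by
    rw [ip_add, ip_smul, ip_smul]
    rcases eq_or_lt_of_le ha with h | h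
    · rw [← h] at hab ⊢
      simp at hab
      rw [hab]
      simpa using hyp
    · exact add_pos_of_pos_of_nonneg (mul_pos h hxp) (mul_nonneg hb hyp.le)
  intro hz
  rw [Set.mem_singleton_iff] at hz
  rw [hz] at hpos
  simp at hpos

lemma mapsCones_of_mem (hK : IsMulticone' S K w) {A : Matrix (Fin d) (Fin d) ℝ}
    (hA : A ∈ S) : MapsCones K A := by
  intro j
  obtain ⟨ℓ, hℓ⟩ := hK.2.2.2.2.2.2.1 A hA j
  refine ⟨ℓ, ?_⟩
  have hcont : Continuous fun u : Fin d → ℝ => A.mulVec u := by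
    have := LinearMap.continuous_of_finiteDimensional (Matrix.mulVecLin A)
    exact continuous_const.matrix_mulVec continuous_id
  set s := K j \ {0} with hs
  set U := (fun u : Fin d → ℝ => A.mulVec u) ⁻¹' interior (K ℓ) with hU
  set V := (fun u : Fin d → ℝ => -A.mulVec u) ⁻¹' interior (K ℓ) with hV
  have hUopen : IsOpen U := isOpen_interior.preimage hcont
  have hVopen : IsOpen V := isOpen_interior.preimage hcont.neg
  have hcover : s ⊆ U ∪ V := by
    rintro u ⟨hu, hu0⟩
    exact hℓ u hu (by simpa using hu0)
  have hdisj : s ∩ (U ∩ V) = ∅ := by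
    ext x
    simp only [Set.mem_inter_iff, Set.mem_empty_iff_false, iff_false, not_and]
    intro hxs hxU hxV
    have h1 : A.mulVec x ∈ K ℓ := interior_subset hxU
    have h2 : -A.mulVec x ∈ K ℓ := interior_subset hxV
    have hne : A.mulVec x ≠ 0 := ne_zero_of_interior hK hxU
    have p1 := mem_K_pos hK h1 hne
    have p2 := mem_K_pos hK h2 (by simpa using hne)
    rw [ip_neg] at p2
    linarith
  have hsne : s.Nonempty := by
    obtain ⟨x, hx, hxne⟩ := exists_ne_zero_mem hK j
    exact ⟨x, hx, by simpa using hxne⟩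
  by_cases hUne : (s ∩ U).Nonempty
  · have hVempty : s ∩ V = ∅ := by
      by_contra hVne
      obtain ⟨x, hx⟩ := (convex_K_sdiff hK j).isPreconnected U V hUopen hVopen hcover hUne
        (Set.nonempty_iff_ne_empty.2 hVne)
      rw [hdisj] at hx
      exact hx
    refine ⟨1, Or.inl rfl, fun u hu hu0 => ?_⟩
    rw [one_smul]
    have hus : u ∈ s := ⟨hu, by simpa using hu0⟩
    rcases hcover hus with h | h
    · exact h
    · have hc : u ∈ s ∩ V := ⟨hus, h⟩
      rw [hVempty] at hc
      exact hc.elim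
  · refine ⟨-1, Or.inr rfl, fun u hu hu0 => ?_⟩
    have hus : u ∈ s := ⟨hu, by simpa using hu0⟩
    rcases hcover hus with h | h
    · exact absurd (Set.mem_inter hus h) (fun hc => hUne ⟨u, hc⟩)
    · rw [neg_one_smul]
      exact h

lemma mapsCones_mul (hK : IsMulticone' S K w) {M B : Matrix (Fin d) (Fin d) ℝ}
    (hM : MapsCones K M) (hB : MapsCones K B) : MapsCones K (M * B) := by
  intro j
  obtain ⟨ℓ₁, ε₁, hε₁, h₁⟩ := hB j
  obtain ⟨ℓ₂, ε₂, hε₂, h₂⟩ := hM ℓ₁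
  refine ⟨ℓ₂, ε₂ * ε₁, by rcases hε₁ with rfl | rfl <;> rcases hε₂ with rfl | rfl <;> norm_num, ?_⟩
  intro u hu hu0
  have hx := h₁ u hu hu0
  have hxK : ε₁ • B.mulVec u ∈ K ℓ₁ := interior_subset hx
  have hxne : ε₁ • B.mulVec u ≠ 0 := ne_zero_of_interior hK hx
  have := h₂ _ hxK hxne
  rw [Matrix.mulVec_smul, smul_smul] at this
  rwa [Matrix.mulVec_mulVec] at this

lemma mapsCones_prod (hK : IsMulticone' S K w) :
    ∀ l : List (Matrix (Fin d) (Fin d) ℝ), l ≠ [] → (∀ M ∈ l, M ∈ S) →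
      MapsCones K l.prod := by
  intro l
  induction l with
  | nil => intro h; exact absurd rfl h
  | cons M t ih =>
    intro _ hmem
    have hM := mapsCones_of_mem hK (hmem M List.mem_cons_self)
    by_cases ht : t = []
    · subst ht
      rw [List.prod_cons, List.prod_nil, mul_one]
      exact hM
    · rw [List.prod_cons]
      exact mapsCones_mul hK hM (ih ht fun N hN => hmem N (List.mem_cons_of_mem _ hN))

lemma mapsCones_semigroup (hK : IsMulticone' S K w) {A : Matrix (Fin d) (Fin d) ℝ}
    (hA : ∃ l : List (Matrix (Fin d) (Fin d) ℝ), l ≠ [] ∧ (∀ M ∈ l, M ∈ S) ∧ A = l.prod) :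
    MapsCones K A := by
  obtain ⟨l, hlne, hmem, rfl⟩ := hA
  exact mapsCones_prod hK l hlne hmem

lemma semigroup_decomp {A : Matrix (Fin d) (Fin d) ℝ}
    (hA : ∃ l : List (Matrix (Fin d) (Fin d) ℝ), l ≠ [] ∧ (∀ M ∈ l, M ∈ S) ∧ A = l.prod) :
    A ∈ S ∨ ∃ B A₁ : Matrix (Fin d) (Fin d) ℝ,
      (∃ l : List (Matrix (Fin d) (Fin d) ℝ), l ≠ [] ∧ (∀ M ∈ l, M ∈ S) ∧ B = l.prod) ∧
      A₁ ∈ S ∧ A = B * A₁ := by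
  obtain ⟨l, hlne, hmem, rfl⟩ := hA
  rcases List.eq_nil_or_concat l with rfl | ⟨L, b, rfl⟩
  · exact absurd rfl hlne
  · rw [List.concat_eq_append] at hmem ⊢
    by_cases hL : L = []
    · subst hL
      left
      simpa using hmem b (by simp)
    · right
      refine ⟨L.prod, b, ⟨L, hL, fun N hN => hmem N (by simp [hN]), rfl⟩,
        hmem b (by simp), ?_⟩
      rw [List.prod_append, List.prod_singleton]

-- ===================== key inequality =====================

lemma abs_pm {e : ℝ} (he : e = 1 ∨ e = -1) : |e| = 1 := by
  rcases he with rfl | rfl <;> norm_num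

lemma key_ineq (hK : IsMulticone' S K w) {δ : ℝ}
    (hδK : ∀ j, ∀ u ∈ K j, δ * _root_.enorm u ≤ ∑ i, u i * w i)
    {B : Matrix (Fin d) (Fin d) ℝ} (hB : MapsCones K B) {ℓ : Fin m} {p q : Fin d → ℝ}
    {ℓ' : Fin m} {ε' : ℝ} (hε' : ε' = 1 ∨ ε' = -1) (hqK : ε' • q ∈ K ℓ')
    {τ : ℝ} (hτ : 0 < τ) (hδ : 0 < δ)
    (hpP : p + τ • q ∈ K ℓ) (hpM : p - τ • q ∈ K ℓ) :
    τ * (δ * _root_.enorm (B.mulVec q)) ≤ _root_.enorm (B.mulVec p) := by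
  have hw1 := hK.2.2.2.2.1
  by_cases hq0 : q = 0
  · simp [hq0, Matrix.mulVec_zero, enorm_zero, enorm_nonneg]
  set Ip := ∑ i, B.mulVec p i * w i with hIp
  set Iq := ∑ i, B.mulVec q i * w i with hIq
  -- Step A : δ * _root_.enorm (B q) ≤ |Iq|
  have habsA : δ * _root_.enorm (B.mulVec q) ≤ |Iq| := by
    obtain ⟨ℓ₀, ε₀, hε₀, hmem₀, _⟩ := mapsCones_memK hK hB ℓ'
    have h1 : ε₀ • B.mulVec (ε' • q) ∈ K ℓ₀ := hmem₀ _ hqK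
    rw [Matrix.mulVec_smul, smul_smul] at h1
    have h2 := hδK ℓ₀ _ h1
    rw [enorm_smul, ip_smul] at h2
    have habs1 : |ε₀ * ε'| = 1 := by
      rw [abs_mul, abs_pm hε₀, abs_pm hε', mul_one]
    rw [habs1, one_mul] at h2
    calc δ * _root_.enorm (B.mulVec q) ≤ (ε₀ * ε') * Iq := h2
    _ ≤ |(ε₀ * ε') * Iq| := le_abs_self _
    _ = |Iq| := by rw [abs_mul, habs1, one_mul]
  -- Step B : sign choice
  obtain ⟨ℓ₂, ε₂, hε₂, hmem₂, _⟩ := mapsCones_memK hK hB ℓ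
  set s : ℝ := if 0 ≤ ε₂ * Iq then -1 else 1 with hs
  have hsq : p + (s * τ) • q ∈ K ℓ := by
    by_cases hst : 0 ≤ ε₂ * Iq
    · rw [hs, if_pos hst, neg_one_mul, neg_smul, ← sub_eq_add_neg]
      exact hpM
    · rw [hs, if_neg hst, one_mul]
      exact hpP
  have h3 : ε₂ • B.mulVec (p + (s * τ) • q) ∈ K ℓ₂ := hmem₂ _ hsq
  have h4 : 0 ≤ ∑ i, (ε₂ • B.mulVec (p + (s * τ) • q)) i * w i := ip_nonneg_of_mem hK h3
  rw [ip_smul, Matrix.mulVec_add, Matrix.mulVec_smul, ip_add, ip_smul, ← hIp, ← hIq] at h4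
  -- h4 : 0 ≤ ε₂ * (Ip + s * τ * Iq)
  have h5 : τ * |Iq| ≤ ε₂ * Ip := by
    rcases hε₂ with rfl | rfl
    · by_cases hst : 0 ≤ (1:ℝ) * Iq
      · rw [hs, if_pos hst] at h4
        rw [one_mul] at hst ⊢
        rw [abs_of_nonneg hst]
        nlinarith
      · rw [hs, if_neg hst] at h4
        rw [one_mul] at hst ⊢
        rw [abs_of_neg (not_le.1 hst)]
        nlinarith
    · by_cases hst : 0 ≤ (-1:ℝ) * Iq
      · rw [hs, if_pos hst] at h4
        have : Iq ≤ 0 := by linarith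
        rcases eq_or_lt_of_le this with h | h
        · rw [h, abs_zero]
          nlinarith
        · rw [abs_of_neg h]
          nlinarith
      · rw [hs, if_neg hst] at h4
        have : 0 < Iq := by nlinarith
        rw [abs_of_pos this]
        nlinarith
  calc τ * (δ * _root_.enorm (B.mulVec q)) ≤ τ * |Iq| :=
        mul_le_mul_of_nonneg_left habsA hτ.le
  _ ≤ ε₂ * Ip := h5
  _ ≤ |ε₂ * Ip| := le_abs_self _
  _ = |Ip| := by rw [abs_mul, abs_pm hε₂, one_mul]
  _ ≤ _root_.enorm (B.mulVec p) := abs_ip_le_enorm hw1 _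

-- ===================== opNorm bound via interior point =====================

lemma opNorm_le_of_ball (hK : IsMulticone' S K w) {δ : ℝ} (hδ : 0 < δ)
    (hδK : ∀ j, ∀ u ∈ K j, δ * _root_.enorm u ≤ ∑ i, u i * w i)
    {x₀ : Fin d → ℝ} {η : ℝ} (hη : 0 < η) {j₀ : Fin m}
    (hball : Metric.ball x₀ η ⊆ K j₀)
    {B : Matrix (Fin d) (Fin d) ℝ} (hB : MapsCones K B) :
    opNorm B ≤ (2 / (η * δ)) * _root_.enorm (B.mulVec x₀) := by
  have hw1 := hK.2.2.2.2.1
  apply opNorm_le ⟨w, enorm_w_one hw1⟩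
  intro u hu
  set q' := (η / 2) • u with hq'
  have hq'n : _root_.enorm q' = η / 2 := by
    rw [hq', enorm_smul, hu, mul_one, abs_of_pos (by linarith)]
  have hmemP : x₀ + q' ∈ K j₀ := by
    apply hball
    rw [Metric.mem_ball, dist_eq_norm, add_sub_cancel_left]
    calc ‖q'‖ ≤ _root_.enorm q' := pinorm_le_enorm _
    _ = η / 2 := hq'n
    _ < η := by linarith
  have hmemM : x₀ - q' ∈ K j₀ := by
    apply hball
    rw [Metric.mem_ball, dist_eq_norm, sub_sub_cancel_left, norm_neg]
    calc ‖q'‖ ≤ _root_.enorm q' := pinorm_le_enorm _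
    _ = η / 2 := hq'n
    _ < η := by linarith
  obtain ⟨ℓ₂, ε₂, hε₂, hmem₂, _⟩ := mapsCones_memK hK hB j₀
  have hP := hδK ℓ₂ _ (hmem₂ _ hmemP)
  have hM := hδK ℓ₂ _ (hmem₂ _ hmemM)
  rw [enorm_smul, abs_pm hε₂, one_mul, ip_smul] at hP hM
  set aP := _root_.enorm (B.mulVec (x₀ + q')) with haP
  set aM := _root_.enorm (B.mulVec (x₀ - q')) with haM
  set IP := ∑ i, B.mulVec (x₀ + q') i * w i with hIP
  set IM := ∑ i, B.mulVec (x₀ - q') i * w i with hIM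
  set I₀ := ∑ i, B.mulVec x₀ i * w i with hI₀
  have hsum : IP + IM = 2 * I₀ := by
    rw [hIP, hIM, Matrix.mulVec_add, Matrix.mulVec_sub, ip_add, ip_sub, ← hI₀]
    ring
  have hI₀le : |I₀| ≤ _root_.enorm (B.mulVec x₀) := abs_ip_le_enorm hw1 _
  have hdiff : B.mulVec (x₀ + q') - B.mulVec (x₀ - q') = η • B.mulVec u := by
    rw [Matrix.mulVec_add, Matrix.mulVec_sub, hq', Matrix.mulVec_smul]
    module
  have htri : η * _root_.enorm (B.mulVec u) ≤ aP + aM := by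
    have h1 : _root_.enorm (η • B.mulVec u) = η * _root_.enorm (B.mulVec u) := by
      rw [enorm_smul, abs_of_pos hη]
    rw [← h1, ← hdiff]
    exact enorm_sub_le _ _
  have hmid : ε₂ * IP + ε₂ * IM ≤ 2 * _root_.enorm (B.mulVec x₀) := by
    have : ε₂ * IP + ε₂ * IM = 2 * (ε₂ * I₀) := by rw [← mul_add, hsum]; ring
    rw [this]
    have h2 : ε₂ * I₀ ≤ |ε₂ * I₀| := le_abs_self _
    have h3 : |ε₂ * I₀| = |I₀| := by rw [abs_mul, abs_pm hε₂, one_mul]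
    linarith
  have hmain : η * δ * _root_.enorm (B.mulVec u) ≤ 2 * _root_.enorm (B.mulVec x₀) := by
    have h6 : δ * (aP + aM) ≤ ε₂ * IP + ε₂ * IM := by
      have := hP; have := hM; linarith [hP, hM]
    have h7 : δ * (η * _root_.enorm (B.mulVec u)) ≤ δ * (aP + aM) :=
      mul_le_mul_of_nonneg_left htri hδ.le
    nlinarith
  rw [div_mul_eq_mul_div, le_div_iff₀ (by positivity : (0:ℝ) < η * δ)]
  linarith

-- ===================== pieces =====================

def piece (K : Fin m → Set (Fin d → ℝ)) (p : Fin m × Bool) : Set (Fin d → ℝ) :=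
  if p.2 then interior (K p.1) else (fun y => -y) ⁻¹' interior (K p.1)

lemma piece_open (K : Fin m → Set (Fin d → ℝ)) (p : Fin m × Bool) : IsOpen (piece K p) := by
  unfold piece
  split
  · exact isOpen_interior
  · exact isOpen_interior.preimage continuous_neg

lemma mem_piece_unique (hK : IsMulticone' S K w) {x : Fin d → ℝ} {p q : Fin m × Bool}
    (hp : x ∈ piece K p) (hq : x ∈ piece K q) : p = q := by
  rcases p with ⟨ℓ, b⟩; rcases q with ⟨ℓ', b'⟩
  by_contra hne
  cases b <;> cases b' <;> simp only [piece, if_true, if_false, Set.mem_preimage,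
    Bool.false_eq_true, if_neg] at hp hq
  · -- both false : -x ∈ int Kℓ, -x ∈ int Kℓ'
    have hℓ : ℓ ≠ ℓ' := fun h => hne (by rw [h])
    have h1 : -x ∈ K ℓ ∩ K ℓ' := ⟨interior_subset hp, interior_subset hq⟩
    rw [hK.2.2.2.2.2.2.2 ℓ ℓ' hℓ] at h1
    exact ne_zero_of_interior hK hp h1
  · -- b = false, b' = true : -x ∈ int Kℓ, x ∈ int Kℓ'
    have p1 := mem_K_pos hK (interior_subset hp) (ne_zero_of_interior hK hp)
    have p2 := mem_K_pos hK (interior_subset hq) (ne_zero_of_interior hK hq)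
    rw [ip_neg] at p1
    linarith
  · have p1 := mem_K_pos hK (interior_subset hp) (ne_zero_of_interior hK hp)
    have p2 := mem_K_pos hK (interior_subset hq) (ne_zero_of_interior hK hq)
    rw [ip_neg] at p2
    linarith
  · have hℓ : ℓ ≠ ℓ' := fun h => hne (by rw [h])
    have h1 : x ∈ K ℓ ∩ K ℓ' := ⟨interior_subset hp, interior_subset hq⟩
    rw [hK.2.2.2.2.2.2.2 ℓ ℓ' hℓ] at h1
    exact ne_zero_of_interior hK hp h1

lemma zero_not_in_pieces (hK : IsMulticone' S K w) :
    (0 : Fin d → ℝ) ∉ ⋃ p : Fin m × Bool, piece K p := by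
  rw [Set.mem_iUnion]
  rintro ⟨⟨ℓ, b⟩, hb⟩
  cases b <;> simp only [piece, if_true, if_false, Set.mem_preimage, neg_zero,
    Bool.false_eq_true, if_neg] at hb <;> exact zero_not_interior hK ℓ hb

lemma ball_subset_piece (hK : IsMulticone' S K w) {x : Fin d → ℝ} {r : ℝ} (hr : 0 < r)
    (hball : Metric.ball x r ⊆ ⋃ p : Fin m × Bool, piece K p)
    {p₁ : Fin m × Bool} (hx : x ∈ piece K p₁) :
    Metric.ball x r ⊆ piece K p₁ := by
  set U := piece K p₁ with hU
  set V := ⋃ q : Fin m × Bool, ⋃ _ : q ≠ p₁, piece K q with hV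
  have hUo : IsOpen U := piece_open K p₁
  have hVo : IsOpen V := isOpen_iUnion fun q => isOpen_iUnion fun _ => piece_open K q
  have hcover : Metric.ball x r ⊆ U ∪ V := by
    intro y hy
    obtain ⟨Q, hQ⟩ := Set.mem_iUnion.1 (hball hy)
    by_cases hq : Q = p₁
    · left
      show y ∈ piece K p₁
      rw [← hq]
      exact hQ
    · right; exact Set.mem_iUnion.2 ⟨Q, Set.mem_iUnion.2 ⟨hq, hQ⟩⟩
  have hUV : Metric.ball x r ∩ (U ∩ V) = ∅ := by
    ext y
    simp only [Set.mem_inter_iff, Set.mem_empty_iff_false, iff_false, not_and]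
    intro _ hyU hyV
    obtain ⟨Q, hQ⟩ := Set.mem_iUnion.1 hyV
    obtain ⟨hQne, hQmem⟩ := Set.mem_iUnion.1 hQ
    exact hQne (mem_piece_unique hK hQmem hyU)
  intro y hy
  by_contra hyU
  have hVne : (Metric.ball x r ∩ V).Nonempty := by
    refine ⟨y, hy, ?_⟩
    rcases hcover hy with h | h
    · exact absurd h hyU
    · exact h
  have hUne : (Metric.ball x r ∩ U).Nonempty := ⟨x, Metric.mem_ball_self hr, hx⟩
  obtain ⟨z, hz⟩ := (convex_ball x r).isPreconnected U V hUo hVo hcover hUne hVne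
  rw [hUV] at hz
  exact hz

-- ===================== compactness constants =====================

lemma exists_normbound (hSne : S.Nonempty) (hScpt : IsCompact S) :
    ∃ N : ℝ, 0 < N ∧ ∀ A ∈ S, ∀ x, _root_.enorm (A.mulVec x) ≤ N * _root_.enorm x := by
  classical
  set g : Matrix (Fin d) (Fin d) ℝ → ℝ := fun A => ∑ i, ∑ j, |A i j| with hg
  have hgc : Continuous g :=
    continuous_finset_sum _ fun i _ => continuous_finset_sum _ fun j _ =>
      ((continuous_apply j).comp (continuous_apply i)).abs
  have himg : IsCompact (g '' S) := hScpt.image hgc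
  obtain ⟨N₀, hN₀⟩ := himg.bddAbove
  have hN₀nn : 0 ≤ N₀ := by
    obtain ⟨A, hA⟩ := hSne
    have h1 : g A ≤ N₀ := hN₀ ⟨A, hA, rfl⟩
    have h2 : 0 ≤ g A := Finset.sum_nonneg fun i _ => Finset.sum_nonneg fun j _ => abs_nonneg _
    linarith
  refine ⟨Real.sqrt d * N₀ + 1, by positivity, ?_⟩
  intro A hA x
  have hrow : ∀ i, |A.mulVec x i| ≤ N₀ * _root_.enorm x := by
    intro i
    have h1 : ∑ j, |A i j| ≤ g A := by
      apply Finset.single_le_sum (f := fun i => ∑ j, |A i j|)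
        (fun i _ => Finset.sum_nonneg fun j _ => abs_nonneg _) (Finset.mem_univ i)
    have h2 : g A ≤ N₀ := hN₀ ⟨A, hA, rfl⟩
    calc |A.mulVec x i| = |∑ j, A i j * x j| := rfl
    _ ≤ ∑ j, |A i j * x j| := Finset.abs_sum_le_sum_abs _ _
    _ ≤ ∑ j, |A i j| * _root_.enorm x := by
        apply Finset.sum_le_sum
        intro j _
        rw [abs_mul]
        exact mul_le_mul_of_nonneg_left (coord_le_enorm x j) (abs_nonneg _)
    _ = (∑ j, |A i j|) * _root_.enorm x := by rw [Finset.sum_mul]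
    _ ≤ N₀ * _root_.enorm x := mul_le_mul_of_nonneg_right (le_trans h1 h2) (enorm_nonneg x)
  have hcb : 0 ≤ N₀ * _root_.enorm x := mul_nonneg hN₀nn (enorm_nonneg x)
  have : _root_.enorm (A.mulVec x) ≤ Real.sqrt d * (N₀ * _root_.enorm x) := by
    unfold _root_.enorm
    have hsumle : ∑ i, ‖A.mulVec x i‖ ^ 2 ≤ ∑ _i : Fin d, (N₀ * _root_.enorm x) ^ 2 := by
      apply Finset.sum_le_sum
      intro i _
      rw [Real.norm_eq_abs]
      have hb1 : -(N₀ * _root_.enorm x) ≤ |A.mulVec x i| := by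
        have := abs_nonneg (A.mulVec x i); linarith
      exact sq_le_sq' hb1 (hrow i)
    calc Real.sqrt (∑ i, ‖A.mulVec x i‖ ^ 2) ≤ Real.sqrt (∑ _i : Fin d, (N₀ * _root_.enorm x) ^ 2) :=
          Real.sqrt_le_sqrt hsumle
    _ = Real.sqrt (d * (N₀ * _root_.enorm x) ^ 2) := by rw [Finset.sum_const, Finset.card_univ]; simp [nsmul_eq_mul]
    _ = Real.sqrt d * (N₀ * _root_.enorm x) := by
        rw [Real.sqrt_mul (by positivity), Real.sqrt_sq hcb]
  calc _root_.enorm (A.mulVec x) ≤ Real.sqrt d * (N₀ * _root_.enorm x) := this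
  _ = (Real.sqrt d * N₀) * _root_.enorm x := by ring
  _ ≤ (Real.sqrt d * N₀ + 1) * _root_.enorm x := by
      apply mul_le_mul_of_nonneg_right _ (enorm_nonneg x)
      linarith

lemma exists_margin (hK : IsMulticone' S K w) (hm : 0 < m) (hScpt : IsCompact S) :
    ∃ r : ℝ, 0 < r ∧ ∀ A ∈ S, ∀ u, u ∈ (⋃ j, K j) → _root_.enorm u = 1 →
      Metric.ball (A.mulVec u) r ⊆ ⋃ p : Fin m × Bool, piece K p := by
  classical
  set Se := {u : Fin d → ℝ | _root_.enorm u = 1} ∩ (⋃ j, K j) with hSe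
  have hclosed : IsClosed Se :=
    (isClosed_eq continuous_enorm continuous_const).inter
      (isClosed_iUnion_of_finite fun j => hK.1 j)
  have hSecpt : IsCompact Se := by
    apply (isCompact_closedBall (0 : Fin d → ℝ) 1).of_isClosed_subset hclosed
    intro u hu
    rw [Metric.mem_closedBall, dist_zero_right]
    calc ‖u‖ ≤ _root_.enorm u := pinorm_le_enorm u
    _ = 1 := hu.1
  have hmvcont : Continuous fun pr : Matrix (Fin d) (Fin d) ℝ × (Fin d → ℝ) =>
      pr.1.mulVec pr.2 := by
    apply continuous_pi; intro i
    simp only [Matrix.mulVec, dotProduct]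
    apply continuous_finset_sum; intro j _
    exact ((continuous_apply j).comp ((continuous_apply i).comp continuous_fst)).mul
      ((continuous_apply j).comp continuous_snd)
  set T := (fun pr : Matrix (Fin d) (Fin d) ℝ × (Fin d → ℝ) => pr.1.mulVec pr.2) '' (S ×ˢ Se)
    with hT
  have hTc : IsCompact T := (hScpt.prod hSecpt).image hmvcont
  have hDopen : IsOpen (⋃ p : Fin m × Bool, piece K p) :=
    isOpen_iUnion fun p => piece_open K p
  have hTD : T ⊆ ⋃ p : Fin m × Bool, piece K p := by
    rintro _ ⟨⟨A, u⟩, ⟨hA, hu⟩, rfl⟩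
    obtain ⟨j, hj⟩ := Set.mem_iUnion.1 hu.2
    obtain ⟨ℓ, ε, hε, hmap⟩ := mapsCones_of_mem hK hA j
    have hune : u ≠ 0 := by
      intro h
      have h1 : _root_.enorm u = 1 := hu.1
      rw [h, enorm_zero] at h1
      exact one_ne_zero h1.symm
    have := hmap u hj hune
    rcases hε with rfl | rfl
    · rw [one_smul] at this
      exact Set.mem_iUnion.2 ⟨(ℓ, true), by simpa [piece] using this⟩
    · rw [neg_one_smul] at this
      exact Set.mem_iUnion.2 ⟨(ℓ, false), by simpa [piece] using this⟩
  obtain ⟨r, hr, hthick⟩ := hTc.exists_thickening_subset_open hDopen hTD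
  refine ⟨r, hr, ?_⟩
  intro A hA u humem hunorm y hy
  apply hthick
  rw [Metric.mem_thickening_iff]
  exact ⟨A.mulVec u, ⟨(A, u), ⟨hA, ⟨hunorm, humem⟩⟩, rfl⟩, hy⟩

lemma enorm_ge_of_ball (hK : IsMulticone' S K w) {x : Fin d → ℝ} {r : ℝ} (hr : 0 < r)
    (hball : Metric.ball x r ⊆ ⋃ p : Fin m × Bool, piece K p) : r ≤ _root_.enorm x := by
  by_contra h
  push_neg at h
  have h0 : (0 : Fin d → ℝ) ∈ Metric.ball x r := by
    rw [Metric.mem_ball, dist_comm, dist_zero_right]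
    calc ‖x‖ ≤ _root_.enorm x := pinorm_le_enorm x
    _ < r := h
  exact zero_not_in_pieces hK (hball h0)

-- ===================== master lower bound =====================

lemma exists_lower (hm : 0 < m) (hSne : S.Nonempty) (hScpt : IsCompact S)
    (hK : IsMulticone' S K w) :
    ∃ C : ℝ, 0 < C ∧ ∀ A : Matrix (Fin d) (Fin d) ℝ,
      (∃ l : List (Matrix (Fin d) (Fin d) ℝ), l ≠ [] ∧ (∀ M ∈ l, M ∈ S) ∧ A = l.prod) →
      ∀ j : Fin m, ∀ t ∈ K j, _root_.enorm t = 1 → opNorm A ≤ C * _root_.enorm (A.mulVec t) := by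
  obtain ⟨δ, hδ, hδ1, hδK⟩ := exists_delta hK hm
  obtain ⟨x₀, hx₀⟩ := hK.2.2.1 ⟨0, hm⟩
  obtain ⟨η, hη, hballη⟩ := Metric.isOpen_iff.1 isOpen_interior x₀ hx₀
  have hballK : Metric.ball x₀ η ⊆ K ⟨0, hm⟩ := fun y hy => interior_subset (hballη hy)
  have hx₀K : x₀ ∈ K ⟨0, hm⟩ := interior_subset hx₀
  have hx₀ne : x₀ ≠ 0 := ne_zero_of_interior hK hx₀
  have hx₀pos : 0 < _root_.enorm x₀ := enorm_pos hx₀ne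
  obtain ⟨N, hN, hNS⟩ := exists_normbound hSne hScpt
  obtain ⟨r, hr, hmargin⟩ := exists_margin hK hm hScpt
  set CY := 2 / (η * δ) with hCY
  have hCYpos : 0 < CY := div_pos two_pos (mul_pos hη hδ)
  set τ₀ := r / (2 * (N * _root_.enorm x₀ + 1)) with hτ₀
  have hτ₀pos : 0 < τ₀ := div_pos hr (by nlinarith)
  set C₁ := CY * (N * _root_.enorm x₀) / r with hC₁
  set C₂ := CY / (τ₀ * δ) with hC₂
  have hC₁pos : 0 < C₁ := div_pos (mul_pos hCYpos (mul_pos hN hx₀pos)) hr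
  have hC₂pos : 0 < C₂ := div_pos hCYpos (mul_pos hτ₀pos hδ)
  refine ⟨max C₁ C₂, lt_max_of_lt_left hC₁pos, ?_⟩
  intro A hA j t ht htn
  have htne : t ≠ 0 := by
    intro h; rw [h, enorm_zero] at htn; exact one_ne_zero htn.symm
  have hYA : opNorm A ≤ CY * _root_.enorm (A.mulVec x₀) :=
    opNorm_le_of_ball hK hδ hδK hη hballK (mapsCones_semigroup hK hA)
  rcases semigroup_decomp hA with hAS | ⟨B, A₁, hBsg, hA₁, rfl⟩
  · have h1 : _root_.enorm (A.mulVec x₀) ≤ N * _root_.enorm x₀ := hNS A hAS x₀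
    have h2 : r ≤ _root_.enorm (A.mulVec t) :=
      enorm_ge_of_ball hK hr (hmargin A hAS t (Set.mem_iUnion.2 ⟨j, ht⟩) htn)
    calc opNorm A ≤ CY * (N * _root_.enorm x₀) :=
          le_trans hYA (mul_le_mul_of_nonneg_left h1 hCYpos.le)
    _ = C₁ * r := by rw [hC₁]; field_simp
    _ ≤ C₁ * _root_.enorm (A.mulVec t) := mul_le_mul_of_nonneg_left h2 hC₁pos.le
    _ ≤ max C₁ C₂ * _root_.enorm (A.mulVec t) :=
        mul_le_mul_of_nonneg_right (le_max_left _ _) (enorm_nonneg _)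
  · have hBmc : MapsCones K B := mapsCones_semigroup hK hBsg
    have hA₁mc : MapsCones K A₁ := mapsCones_of_mem hK hA₁
    set p₀ := A₁.mulVec t with hp₀
    have hball₀ : Metric.ball p₀ r ⊆ ⋃ p : Fin m × Bool, piece K p :=
      hmargin A₁ hA₁ t (Set.mem_iUnion.2 ⟨j, ht⟩) htn
    obtain ⟨ℓ₁, ε₁, hε₁, himg₁⟩ := hA₁mc j
    set q := A₁.mulVec x₀ with hqdef
    obtain ⟨ℓ₀, ε₀, hε₀, himg₀⟩ := hA₁mc ⟨0, hm⟩
    have hqK : ε₀ • q ∈ K ℓ₀ := interior_subset (himg₀ x₀ hx₀K hx₀ne)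
    have hqn : _root_.enorm q ≤ N * _root_.enorm x₀ := hNS A₁ hA₁ x₀
    set τ := r / (2 * (_root_.enorm q + 1)) with hτdef
    have hτpos : 0 < τ := div_pos hr (by nlinarith [enorm_nonneg q])
    have hτ₀le : τ₀ ≤ τ := by
      rw [hτ₀, hτdef, div_le_div_iff₀ (by nlinarith) (by nlinarith [enorm_nonneg q])]
      nlinarith [hr.le, hqn]
    have hε₁sq : ε₁ * ε₁ = 1 := by rcases hε₁ with rfl | rfl <;> norm_num
    have hpiece : ∀ y ∈ Metric.ball p₀ r, ε₁ • y ∈ interior (K ℓ₁) := by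
      have hmemp := himg₁ t ht htne
      rcases hε₁ with rfl | rfl
      · have hx : p₀ ∈ piece K (ℓ₁, true) := by
          rw [one_smul] at hmemp
          simpa [piece] using hmemp
        intro y hy
        have := ball_subset_piece hK hr hball₀ hx hy
        rw [one_smul]
        simpa [piece] using this
      · have hx : p₀ ∈ piece K (ℓ₁, false) := by
          rw [neg_one_smul] at hmemp
          simpa [piece] using hmemp
        intro y hy
        have := ball_subset_piece hK hr hball₀ hx hy
        rw [neg_one_smul]
        simpa [piece] using this
    have hpm : ∀ c : ℝ, |c| * _root_.enorm q < r → (ε₁ • p₀) + c • q ∈ K ℓ₁ := by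
      intro c hc
      have hy : p₀ + (ε₁ * c) • q ∈ Metric.ball p₀ r := by
        rw [Metric.mem_ball, dist_eq_norm, add_sub_cancel_left]
        calc ‖(ε₁ * c) • q‖ ≤ _root_.enorm ((ε₁ * c) • q) := pinorm_le_enorm _
        _ = |ε₁ * c| * _root_.enorm q := enorm_smul _ _
        _ = |c| * _root_.enorm q := by rw [abs_mul, abs_pm hε₁, one_mul]
        _ < r := hc
      have h2 := interior_subset (hpiece _ hy)
      have h3 : ε₁ • (p₀ + (ε₁ * c) • q) = ε₁ • p₀ + c • q := by
        rw [smul_add, smul_smul]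
        congr 1
        rw [show ε₁ * (ε₁ * c) = (ε₁ * ε₁) * c by ring, hε₁sq, one_mul]
      rwa [h3] at h2
    have hτq : |τ| * _root_.enorm q < r := by
      rw [abs_of_pos hτpos, hτdef, div_mul_eq_mul_div, div_lt_iff₀ (by nlinarith [enorm_nonneg q])]
      nlinarith [enorm_nonneg q]
    have hpP : (ε₁ • p₀) + τ • q ∈ K ℓ₁ := hpm τ hτq
    have hpM : (ε₁ • p₀) - τ • q ∈ K ℓ₁ := by
      have := hpm (-τ) (by rwa [abs_neg])
      rwa [neg_smul, ← sub_eq_add_neg] at this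
    have key := key_ineq hK hδK hBmc hε₀ hqK hτpos hδ hpP hpM
    have key2 : τ * (δ * _root_.enorm ((B * A₁).mulVec x₀)) ≤ _root_.enorm ((B * A₁).mulVec t) := by
      rw [Matrix.mulVec_smul, enorm_smul, abs_pm hε₁, one_mul] at key
      rw [hp₀, hqdef, Matrix.mulVec_mulVec, Matrix.mulVec_mulVec] at key
      exact key
    have h9 : τ₀ * (δ * _root_.enorm ((B * A₁).mulVec x₀)) ≤ _root_.enorm ((B * A₁).mulVec t) :=
      le_trans (mul_le_mul_of_nonneg_right hτ₀le
        (mul_nonneg hδ.le (enorm_nonneg _))) key2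
    calc opNorm (B * A₁) ≤ CY * _root_.enorm ((B * A₁).mulVec x₀) := hYA
    _ = C₂ * (τ₀ * (δ * _root_.enorm ((B * A₁).mulVec x₀))) := by
        rw [hC₂]; field_simp
    _ ≤ C₂ * _root_.enorm ((B * A₁).mulVec t) := mul_le_mul_of_nonneg_left h9 hC₂pos.le
    _ ≤ max C₁ C₂ * _root_.enorm ((B * A₁).mulVec t) :=
        mul_le_mul_of_nonneg_right (le_max_right _ _) (enorm_nonneg _)

-- ===================== complex algebra =====================

lemma sum_comb {n : ℕ} (f g : Fin n → ℂ) (c : ℂ) :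
    ∑ j, (c * f j + c * g j * Complex.I) = c * ((∑ j, f j) + (∑ j, g j) * Complex.I) := by
  rw [Finset.sum_add_distrib, ← Finset.mul_sum, ← Finset.sum_mul, ← Finset.mul_sum]
  ring

lemma psi_repr (w : Fin d → ℝ) (A : Matrix (Fin d) (Fin d) ℝ) (c : ℂ) (u v : Fin d → ℝ) :
    ∑ i, mulVecC A
        (fun i => c * (((u i : ℂ) + (v i : ℂ)) + Complex.I * ((u i : ℂ) - (v i : ℂ)))) i
        * (w i : ℂ)
      = c * (((∑ i, A.mulVec (u + v) i * w i : ℝ) : ℂ)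
           + ((∑ i, A.mulVec (u - v) i * w i : ℝ) : ℂ) * Complex.I) := by
  have hP : ∀ i, ((A.mulVec (u + v) i : ℝ) : ℂ) = ∑ j, (A i j : ℂ) * ((u j : ℂ) + (v j : ℂ)) := by
    intro i
    simp only [Matrix.mulVec, dotProduct, Pi.add_apply]
    push_cast
    rfl
  have hQ : ∀ i, ((A.mulVec (u - v) i : ℝ) : ℂ) = ∑ j, (A i j : ℂ) * ((u j : ℂ) - (v j : ℂ)) := by
    intro i
    simp only [Matrix.mulVec, dotProduct, Pi.sub_apply]
    push_cast
    rfl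
  have hterm : ∀ i, mulVecC A
      (fun i => c * (((u i : ℂ) + (v i : ℂ)) + Complex.I * ((u i : ℂ) - (v i : ℂ)))) i
      = c * (((A.mulVec (u + v) i : ℝ) : ℂ) + ((A.mulVec (u - v) i : ℝ) : ℂ) * Complex.I) := by
    intro i
    have h0 : mulVecC A
        (fun i => c * (((u i : ℂ) + (v i : ℂ)) + Complex.I * ((u i : ℂ) - (v i : ℂ)))) i
        = ∑ j, (A i j : ℂ) * (c * (((u j : ℂ) + (v j : ℂ)) + Complex.I * ((u j : ℂ) - (v j : ℂ)))) := by
      simp only [mulVecC, Matrix.mulVec, dotProduct, Matrix.map_apply]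
    rw [h0, hP, hQ]
    calc ∑ j, (A i j : ℂ) * (c * (((u j : ℂ) + (v j : ℂ)) + Complex.I * ((u j : ℂ) - (v j : ℂ))))
        = ∑ j, (c * ((A i j : ℂ) * ((u j : ℂ) + (v j : ℂ)))
            + c * ((A i j : ℂ) * ((u j : ℂ) - (v j : ℂ))) * Complex.I) := by
          apply Finset.sum_congr rfl; intro j _; ring
    _ = c * ((∑ j, (A i j : ℂ) * ((u j : ℂ) + (v j : ℂ)))
           + (∑ j, (A i j : ℂ) * ((u j : ℂ) - (v j : ℂ))) * Complex.I) := sum_comb _ _ _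
  calc ∑ i, mulVecC A
        (fun i => c * (((u i : ℂ) + (v i : ℂ)) + Complex.I * ((u i : ℂ) - (v i : ℂ)))) i
        * (w i : ℂ)
      = ∑ i, (c * (((A.mulVec (u + v) i : ℝ) : ℂ) * (w i : ℂ))
          + c * (((A.mulVec (u - v) i : ℝ) : ℂ) * (w i : ℂ)) * Complex.I) := by
        apply Finset.sum_congr rfl; intro i _
        rw [hterm i]; ring
  _ = c * ((∑ i, ((A.mulVec (u + v) i : ℝ) : ℂ) * (w i : ℂ))
        + (∑ i, ((A.mulVec (u - v) i : ℝ) : ℂ) * (w i : ℂ)) * Complex.I) := sum_comb _ _ _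
  _ = c * (((∑ i, A.mulVec (u + v) i * w i : ℝ) : ℂ)
        + ((∑ i, A.mulVec (u - v) i * w i : ℝ) : ℂ) * Complex.I) := by
      push_cast
      ring

lemma mulVecC_one (z : Fin d → ℂ) : mulVecC (1 : Matrix (Fin d) (Fin d) ℝ) z = z := by
  unfold mulVecC
  rw [Matrix.map_one _ Complex.ofReal_zero Complex.ofReal_one, Matrix.one_mulVec]

lemma abs_c_mul (c : ℂ) (x y : ℝ) :
    ‖c * ((x : ℂ) + (y : ℂ) * Complex.I)‖ = ‖c‖ * Real.sqrt (x ^ 2 + y ^ 2) := by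
  rw [norm_mul]
  congr 1
  rw [Complex.norm_def, Complex.normSq_apply]
  simp only [Complex.add_re, Complex.ofReal_re, Complex.mul_re, Complex.ofReal_im,
    Complex.I_re, Complex.I_im, Complex.add_im, Complex.mul_im]
  ring_nf

lemma abs_le_sqrt2 (x y : ℝ) : |x| ≤ Real.sqrt (x ^ 2 + y ^ 2) := by
  rw [← Real.sqrt_sq_eq_abs]
  apply Real.sqrt_le_sqrt
  nlinarith [sq_nonneg y]

lemma sqrt_le_abs_add (x y : ℝ) : Real.sqrt (x ^ 2 + y ^ 2) ≤ |x| + |y| := by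
  rw [show |x| + |y| = Real.sqrt ((|x| + |y|) ^ 2) from
    (Real.sqrt_sq (by positivity)).symm]
  apply Real.sqrt_le_sqrt
  nlinarith [mul_nonneg (abs_nonneg x) (abs_nonneg y), sq_abs x, sq_abs y]


end Stmt9Aux

set_option maxHeartbeats 1000000 in
open Stmt9Aux in
/-- Theorem 3.1(vii): two-sided comparison of |⟨Az,w⟩| with the operator norm of A
uniformly over z ∈ Ω and A in the generated semigroup. -/
theorem stmt9 {d m : ℕ} (hd : 1 ≤ d) (hm : 0 < m)
    (S : Set (Matrix (Fin d) (Fin d) ℝ)) (hSne : S.Nonempty) (hScpt : IsCompact S)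
    (K : Fin m → Set (Fin d → ℝ)) (w : Fin d → ℝ) (hK : IsMulticone S K w)
    (Ω : Set (Fin d → ℂ))
    (hΩ : Ω = {z : Fin d → ℂ | (∃ j, z ∈ interior (complexify (K j))) ∧
      ∑ i, z i * (w i : ℂ) = 1}) :
    ∃ C : ℝ, 0 < C ∧ ∀ A ∈ semigroupOf S, ∀ z ∈ Ω,
      C⁻¹ * opNorm A ≤ ‖∑ i, mulVecC A z i * (w i : ℂ)‖ ∧
      ‖∑ i, mulVecC A z i * (w i : ℂ)‖ ≤ C * opNorm A := by
  classical
  have hK' : IsMulticone' S K w := hK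
  have hw1 : ∑ i, w i ^ 2 = 1 := hK'.2.2.2.2.1
  obtain ⟨δ, hδ, hδ1, hδK⟩ := exists_delta hK' hm
  obtain ⟨Cl, hCl, hlower⟩ := exists_lower hm hSne hScpt hK'
  set C := max (4 * Cl / δ) (2 / δ) + 1 with hCdef
  have h2δ : 0 < 2 / δ := by positivity
  have hCpos : 0 < C := by
    rw [hCdef]
    have := le_max_right (4 * Cl / δ) (2 / δ)
    linarith
  have hC2δ : 2 / δ ≤ C := by
    have := le_max_right (4 * Cl / δ) (2 / δ); linarith
  have hC4 : 4 * Cl / δ ≤ C := by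
    have := le_max_left (4 * Cl / δ) (2 / δ); linarith
  refine ⟨C, hCpos, ?_⟩
  intro A hA z hz
  rw [hΩ] at hz
  obtain ⟨⟨j, hzj⟩, hz1⟩ := hz
  obtain ⟨c, u, v, hu, hv, hzeq⟩ := interior_subset hzj
  set α := ∑ i, A.mulVec (u + v) i * w i with hα
  set β := ∑ i, A.mulVec (u - v) i * w i with hβ
  set a := ∑ i, (u + v) i * w i with ha
  set b := ∑ i, (u - v) i * w i with hb
  have hψ : ∑ i, mulVecC A z i * (w i : ℂ) = c * ((α : ℂ) + (β : ℂ) * Complex.I) := by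
    rw [hzeq]; exact psi_repr w A c u v
  have hψabs : ‖∑ i, mulVecC A z i * (w i : ℂ)‖
      = ‖c‖ * Real.sqrt (α ^ 2 + β ^ 2) := by
    rw [hψ, abs_c_mul]
  have hzw : (1 : ℂ) = c * ((a : ℂ) + (b : ℂ) * Complex.I) := by
    have h2 := psi_repr w (1 : Matrix (Fin d) (Fin d) ℝ) c u v
    rw [mulVecC_one, Matrix.one_mulVec, Matrix.one_mulVec] at h2
    rw [hzeq] at hz1
    rw [h2] at hz1
    exact hz1.symm
  have h1abs : ‖c‖ * Real.sqrt (a ^ 2 + b ^ 2) = 1 := by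
    have h3 := congrArg (‖·‖) hzw
    rw [norm_one, abs_c_mul] at h3
    exact h3.symm
  have hcnn : 0 ≤ ‖c‖ := norm_nonneg _
  have hIa : a = (∑ i, u i * w i) + ∑ i, v i * w i := by rw [ha, ip_add]
  have hIb : b = (∑ i, u i * w i) - ∑ i, v i * w i := by rw [hb, ip_sub]
  have hau : δ * _root_.enorm u ≤ ∑ i, u i * w i := hδK j u hu
  have hav : δ * _root_.enorm v ≤ ∑ i, v i * w i := hδK j v hv
  have habsu : |∑ i, u i * w i| ≤ _root_.enorm u := abs_ip_le_enorm hw1 u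
  have habsv : |∑ i, v i * w i| ≤ _root_.enorm v := abs_ip_le_enorm hw1 v
  have ha_ge : δ * (_root_.enorm u + _root_.enorm v) ≤ a := by
    rw [hIa]
    have := abs_nonneg (∑ i, u i * w i)
    nlinarith [hau, hav]
  have ha_le : |a| ≤ _root_.enorm u + _root_.enorm v := by
    rw [hIa]
    refine le_trans (abs_add_le _ _) ?_
    linarith
  have hb_le : |b| ≤ _root_.enorm u + _root_.enorm v := by
    rw [hIb, sub_eq_add_neg]
    refine le_trans (abs_add_le _ _) ?_
    rw [abs_neg]
    linarith
  have hnorm1 : 1 ≤ ‖c‖ * (|a| + |b|) := by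
    have hs := sqrt_le_abs_add a b
    have h4 := mul_le_mul_of_nonneg_left hs hcnn
    linarith
  have hnorm2 : ‖c‖ * (δ * (_root_.enorm u + _root_.enorm v)) ≤ 1 := by
    have h1 := mul_le_mul_of_nonneg_left ha_ge hcnn
    have h2 : a ≤ |a| := le_abs_self a
    have h3 : |a| ≤ Real.sqrt (a ^ 2 + b ^ 2) := abs_le_sqrt2 a b
    nlinarith
  -- upper bound
  have hupper : ‖∑ i, mulVecC A z i * (w i : ℂ)‖ ≤ (2 / δ) * opNorm A := by
    have hαup : |α| ≤ opNorm A * (_root_.enorm u + _root_.enorm v) := by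
      calc |α| ≤ _root_.enorm (A.mulVec (u + v)) := abs_ip_le_enorm hw1 _
      _ ≤ opNorm A * _root_.enorm (u + v) := enorm_mulVec_le A _
      _ ≤ opNorm A * (_root_.enorm u + _root_.enorm v) :=
          mul_le_mul_of_nonneg_left (enorm_add_le u v) (opNorm_nonneg A)
    have hβup : |β| ≤ opNorm A * (_root_.enorm u + _root_.enorm v) := by
      calc |β| ≤ _root_.enorm (A.mulVec (u - v)) := abs_ip_le_enorm hw1 _
      _ ≤ opNorm A * _root_.enorm (u - v) := enorm_mulVec_le A _
      _ ≤ opNorm A * (_root_.enorm u + _root_.enorm v) :=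
          mul_le_mul_of_nonneg_left (enorm_sub_le u v) (opNorm_nonneg A)
    rw [hψabs]
    have hs := sqrt_le_abs_add α β
    have h4 : ‖c‖ * (_root_.enorm u + _root_.enorm v) ≤ 1 / δ := by
      rw [le_div_iff₀ hδ]
      linarith [hnorm2]
    have s1 : ‖c‖ * Real.sqrt (α ^ 2 + β ^ 2) ≤ ‖c‖ * (|α| + |β|) :=
      mul_le_mul_of_nonneg_left hs hcnn
    have s2 : |α| + |β| ≤ 2 * (opNorm A * (_root_.enorm u + _root_.enorm v)) := by linarith
    have s3 : ‖c‖ * (|α| + |β|)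
        ≤ ‖c‖ * (2 * (opNorm A * (_root_.enorm u + _root_.enorm v))) :=
      mul_le_mul_of_nonneg_left s2 hcnn
    have s4 : ‖c‖ * (2 * (opNorm A * (_root_.enorm u + _root_.enorm v)))
        = 2 * opNorm A * (‖c‖ * (_root_.enorm u + _root_.enorm v)) := by ring
    have s5 : 2 * opNorm A * (‖c‖ * (_root_.enorm u + _root_.enorm v))
        ≤ 2 * opNorm A * (1 / δ) :=
      mul_le_mul_of_nonneg_left h4 (by nlinarith [opNorm_nonneg A])
    have s6 : 2 * opNorm A * (1 / δ) = 2 / δ * opNorm A := by ring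
    linarith
  -- lower bound preparation
  obtain ⟨ℓ, ε, hε, hmemKA, _⟩ := mapsCones_memK hK' (mapsCones_semigroup hK' hA) j
  have e1 : δ * _root_.enorm (A.mulVec u) ≤ ∑ i, (ε • A.mulVec u) i * w i := by
    have h5 := hδK ℓ _ (hmemKA u hu)
    rwa [enorm_smul, abs_pm hε, one_mul] at h5
  have e2 : δ * _root_.enorm (A.mulVec v) ≤ ∑ i, (ε • A.mulVec v) i * w i := by
    have h5 := hδK ℓ _ (hmemKA v hv)
    rwa [enorm_smul, abs_pm hε, one_mul] at h5
  have hεα : (∑ i, (ε • A.mulVec u) i * w i) + (∑ i, (ε • A.mulVec v) i * w i) = ε * α := by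
    rw [ip_smul, ip_smul, hα, Matrix.mulVec_add, ip_add]
    ring
  have hεabs : ε * α ≤ |α| := by
    calc ε * α ≤ |ε * α| := le_abs_self _
    _ = |α| := by rw [abs_mul, abs_pm hε, one_mul]
  have h0u : (0:ℝ) ≤ δ * _root_.enorm (A.mulVec u) := mul_nonneg hδ.le (enorm_nonneg _)
  have h0v : (0:ℝ) ≤ δ * _root_.enorm (A.mulVec v) := mul_nonneg hδ.le (enorm_nonneg _)
  have hAu_le : δ * _root_.enorm (A.mulVec u) ≤ |α| := by linarith
  have hAv_le : δ * _root_.enorm (A.mulVec v) ≤ |α| := by linarith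
  have hψ_ge_u : ‖c‖ * (δ * _root_.enorm (A.mulVec u))
      ≤ ‖∑ i, mulVecC A z i * (w i : ℂ)‖ := by
    rw [hψabs]
    exact mul_le_mul_of_nonneg_left (le_trans hAu_le (abs_le_sqrt2 α β)) hcnn
  have hψ_ge_v : ‖c‖ * (δ * _root_.enorm (A.mulVec v))
      ≤ ‖∑ i, mulVecC A z i * (w i : ℂ)‖ := by
    rw [hψabs]
    exact mul_le_mul_of_nonneg_left (le_trans hAv_le (abs_le_sqrt2 α β)) hcnn
  have hψnn : 0 ≤ ‖∑ i, mulVecC A z i * (w i : ℂ)‖ := norm_nonneg _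
  have hfinish : ∀ t : Fin d → ℝ, t ∈ K j → 1 ≤ 4 * (‖c‖ * _root_.enorm t) →
      ‖c‖ * (δ * _root_.enorm (A.mulVec t))
        ≤ ‖∑ i, mulVecC A z i * (w i : ℂ)‖ →
      opNorm A ≤ C * ‖∑ i, mulVecC A z i * (w i : ℂ)‖ := by
    intro t htK h6 hψge
    have htne : t ≠ 0 := by
      intro h0
      rw [h0, enorm_zero, mul_zero, mul_zero] at h6
      linarith
    have hupos : 0 < _root_.enorm t := enorm_pos htne
    have hth : _root_.enorm ((_root_.enorm t)⁻¹ • t) = 1 := by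
      rw [enorm_smul, abs_of_nonneg (inv_nonneg.2 hupos.le)]
      field_simp
    have hthK : (_root_.enorm t)⁻¹ • t ∈ K j := hK'.2.2.2.1 j _ (inv_nonneg.2 hupos.le) t htK
    have h5' := hlower A hA j _ hthK hth
    rw [Matrix.mulVec_smul, enorm_smul, abs_of_nonneg (inv_nonneg.2 hupos.le)] at h5'
    have h5 : opNorm A * _root_.enorm t ≤ Cl * _root_.enorm (A.mulVec t) := by
      have h5'' := mul_le_mul_of_nonneg_right h5' hupos.le
      calc opNorm A * _root_.enorm t
          ≤ Cl * ((_root_.enorm t)⁻¹ * _root_.enorm (A.mulVec t)) * _root_.enorm t := h5''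
      _ = Cl * _root_.enorm (A.mulVec t) := by field_simp
    have h8 : opNorm A ≤ opNorm A * (4 * (‖c‖ * _root_.enorm t)) := by
      calc opNorm A = opNorm A * 1 := (mul_one _).symm
      _ ≤ opNorm A * (4 * (‖c‖ * _root_.enorm t)) :=
          mul_le_mul_of_nonneg_left h6 (opNorm_nonneg A)
    have h10 : opNorm A * (4 * (‖c‖ * _root_.enorm t))
        = 4 * ‖c‖ * (opNorm A * _root_.enorm t) := by ring
    have h11 : 4 * ‖c‖ * (opNorm A * _root_.enorm t)
        ≤ 4 * ‖c‖ * (Cl * _root_.enorm (A.mulVec t)) :=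
      mul_le_mul_of_nonneg_left h5 (by nlinarith)
    have h12 : 4 * ‖c‖ * (Cl * _root_.enorm (A.mulVec t))
        = (4 * Cl / δ) * (‖c‖ * (δ * _root_.enorm (A.mulVec t))) := by
      field_simp
    have h13 : (4 * Cl / δ) * (‖c‖ * (δ * _root_.enorm (A.mulVec t)))
        ≤ (4 * Cl / δ) * ‖∑ i, mulVecC A z i * (w i : ℂ)‖ :=
      mul_le_mul_of_nonneg_left hψge (by positivity)
    have h14 : (4 * Cl / δ) * ‖∑ i, mulVecC A z i * (w i : ℂ)‖
        ≤ C * ‖∑ i, mulVecC A z i * (w i : ℂ)‖ :=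
      mul_le_mul_of_nonneg_right hC4 hψnn
    exact le_trans h8 (le_trans (le_of_eq h10) (le_trans h11
      (le_trans (le_of_eq h12) (le_trans h13 h14))))
  have hmain : opNorm A ≤ C * ‖∑ i, mulVecC A z i * (w i : ℂ)‖ := by
    rcases le_total (_root_.enorm v) (_root_.enorm u) with hcase | hcase
    · refine hfinish u hu ?_ hψ_ge_u
      have hx : |a| + |b| ≤ 4 * _root_.enorm u := by linarith
      nlinarith [mul_le_mul_of_nonneg_left hx hcnn]
    · refine hfinish v hv ?_ hψ_ge_v
      have hx : |a| + |b| ≤ 4 * _root_.enorm v := by linarith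
      nlinarith [mul_le_mul_of_nonneg_left hx hcnn]
  constructor
  · rw [inv_mul_le_iff₀ hCpos]
    exact hmain
  · exact le_trans hupper (mul_le_mul_of_nonneg_right hC2δ (opNorm_nonneg A))
end

section
/- Let K_1, K_2 ⊆ ℝ^d be ℝ-cones and let A ∈ M_d(ℝ) be such that A(K_1 ∖ {0}) ⊆ (int K_2) ∪ (−int K_2). Then A(K_1^ℂ ∖ {0}) ⊆ int(K_2^ℂ). -/
open scoped BigOperators Pointwise

section Aux

private lemma key_interior {d : ℕ} (K : Set (Fin d → ℝ)) (c : ℂ) (hc : c ≠ 0) (p q : Fin d → ℝ)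
    (hp : p ∈ interior K) (hq : q ∈ interior K) :
    (fun i => c * (((p i : ℂ) + (q i : ℂ)) + Complex.I * ((p i : ℂ) - (q i : ℂ))))
      ∈ interior (complexify K) := by
  set g : (Fin d → ℂ) → ((Fin d → ℝ) × (Fin d → ℝ)) :=
    fun z => (fun i => ((c⁻¹ * z i).re + (c⁻¹ * z i).im) / 2,
              fun i => ((c⁻¹ * z i).re - (c⁻¹ * z i).im) / 2) with hgdef
  have hg : Continuous g := by
    apply Continuous.prodMk <;> exact continuous_pi fun i => by fun_prop
  have main : ∀ w : ℂ, ((((w.re + w.im) / 2 : ℝ) : ℂ) + (((w.re - w.im) / 2 : ℝ) : ℂ))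
      + Complex.I * ((((w.re + w.im) / 2 : ℝ) : ℂ) - (((w.re - w.im) / 2 : ℝ) : ℂ)) = w := by
    intro w
    have h := Complex.re_add_im w
    push_cast
    calc ((w.re : ℂ) + w.im) / 2 + ((w.re : ℂ) - w.im) / 2
        + Complex.I * (((w.re : ℂ) + w.im) / 2 - ((w.re : ℂ) - w.im) / 2)
        = (w.re : ℂ) + (w.im : ℂ) * Complex.I := by ring
      _ = w := h
  apply mem_interior.mpr
  refine ⟨g ⁻¹' ((interior K) ×ˢ (interior K)), ?_,
    hg.isOpen_preimage _ (isOpen_interior.prod isOpen_interior), ?_⟩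
  · intro z hz
    rw [Set.mem_preimage, Set.mem_prod] at hz
    refine ⟨c, (g z).1, (g z).2, interior_subset hz.1, interior_subset hz.2, funext fun i => ?_⟩
    show z i = c * _
    simp only [hgdef]
    rw [main (c⁻¹ * z i), mul_inv_cancel_left₀ hc]
  · rw [Set.mem_preimage, Set.mem_prod]
    have hre : ∀ i, (c⁻¹ * ((fun i => c * (((p i : ℂ) + (q i : ℂ))
        + Complex.I * ((p i : ℂ) - (q i : ℂ)))) i)) = (((p i : ℂ) + (q i : ℂ))
        + Complex.I * ((p i : ℂ) - (q i : ℂ))) := fun i => inv_mul_cancel_left₀ hc _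
    constructor
    · have : (g (fun i => c * (((p i : ℂ) + (q i : ℂ)) + Complex.I * ((p i : ℂ) - (q i : ℂ))))).1 = p := by
        funext i
        simp only [hgdef]
        rw [hre i]
        simp [Complex.add_re, Complex.add_im, Complex.mul_re, Complex.mul_im]
      rw [this]; exact hp
    · have : (g (fun i => c * (((p i : ℂ) + (q i : ℂ)) + Complex.I * ((p i : ℂ) - (q i : ℂ))))).2 = q := by
        funext i
        simp only [hgdef]
        rw [hre i]
        simp [Complex.add_re, Complex.add_im, Complex.mul_re, Complex.mul_im]
      rw [this]; exact hq

private lemma mulVecC_formula {d : ℕ} (A : Matrix (Fin d) (Fin d) ℝ) (c : ℂ) (u v : Fin d → ℝ) :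
    mulVecC A (fun i => c * (((u i : ℂ) + (v i : ℂ)) + Complex.I * ((u i : ℂ) - (v i : ℂ)))) =
    fun i => c * (((A.mulVec u i : ℂ) + (A.mulVec v i : ℂ))
      + Complex.I * ((A.mulVec u i : ℂ) - (A.mulVec v i : ℂ))) := by
  funext i
  simp only [mulVecC, Matrix.mulVec, dotProduct, Matrix.map_apply]
  push_cast
  calc ∑ j, (A i j : ℂ) * (c * (((u j : ℂ) + v j) + Complex.I * ((u j : ℂ) - v j)))
      = ∑ j, (c * (1 + Complex.I) * ((A i j : ℂ) * u j)
        + c * (1 - Complex.I) * ((A i j : ℂ) * v j)) := by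
        refine Finset.sum_congr rfl fun j _ => by ring
    _ = c * (1 + Complex.I) * (∑ j, (A i j : ℂ) * u j)
        + c * (1 - Complex.I) * (∑ j, (A i j : ℂ) * v j) := by
        rw [Finset.sum_add_distrib, ← Finset.mul_sum, ← Finset.mul_sum]
    _ = c * (((∑ j, (A i j : ℂ) * u j) + ∑ j, (A i j : ℂ) * v j)
        + Complex.I * ((∑ j, (A i j : ℂ) * u j) - ∑ j, (A i j : ℂ) * v j)) := by ring

end Aux

/-- Corollary 3.8: a matrix contracting an ℝ-cone into (±) the interior of another
maps the punctured complexification into the interior of the complexification. -/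
theorem stmt14 {d : ℕ} (K₁ K₂ : Set (Fin d → ℝ)) (h₁ : IsRCone K₁) (h₂ : IsRCone K₂)
    (A : Matrix (Fin d) (Fin d) ℝ)
    (hA : ∀ u ∈ K₁, u ≠ 0 → A.mulVec u ∈ interior K₂ ∨ -A.mulVec u ∈ interior K₂) :
    ∀ z ∈ complexify K₁, z ≠ 0 → mulVecC A z ∈ interior (complexify K₂) := by
  rintro z ⟨c, u, v, hu, hv, rfl⟩ hz
  have hc : c ≠ 0 := by
    rintro rfl
    exact hz (funext fun i => by simp)
  rw [mulVecC_formula]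
  have hI1 : (1 : ℂ) - Complex.I ≠ 0 := by
    simp [Complex.ext_iff]
  have hI2 : (1 : ℂ) + Complex.I ≠ 0 := by
    simp [Complex.ext_iff]
  by_cases hu0 : u = 0
  · -- u = 0, so v ≠ 0
    have hv0 : v ≠ 0 := by
      rintro rfl
      subst hu0
      exact hz (funext fun i => by simp)
    subst hu0
    have hAv0 : A.mulVec (0 : Fin d → ℝ) = 0 := Matrix.mulVec_zero A
    rcases hA v hv hv0 with h | h
    · have heq : (fun i => c * (((A.mulVec 0 i : ℂ) + (A.mulVec v i : ℂ))
          + Complex.I * ((A.mulVec 0 i : ℂ) - (A.mulVec v i : ℂ)))) =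
          fun i => (c * (1 - Complex.I) / 2) * (((A.mulVec v i : ℂ) + (A.mulVec v i : ℂ))
          + Complex.I * ((A.mulVec v i : ℂ) - (A.mulVec v i : ℂ))) := by
        funext i; rw [hAv0]; simp only [Pi.zero_apply]; push_cast; ring
      rw [heq]
      exact key_interior K₂ _ (div_ne_zero (mul_ne_zero hc hI1) two_ne_zero) _ _ h h
    · have heq : (fun i => c * (((A.mulVec 0 i : ℂ) + (A.mulVec v i : ℂ))
          + Complex.I * ((A.mulVec 0 i : ℂ) - (A.mulVec v i : ℂ)))) =
          fun i => (-(c * (1 - Complex.I)) / 2) * ((((-A.mulVec v) i : ℂ) + ((-A.mulVec v) i : ℂ))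
          + Complex.I * (((-A.mulVec v) i : ℂ) - ((-A.mulVec v) i : ℂ))) := by
        funext i; rw [hAv0]; simp only [Pi.zero_apply, Pi.neg_apply]; push_cast; ring
      rw [heq]
      exact key_interior K₂ _ (div_ne_zero (neg_ne_zero.mpr (mul_ne_zero hc hI1)) two_ne_zero) _ _ h h
  · by_cases hv0 : v = 0
    · subst hv0
      have hAv0 : A.mulVec (0 : Fin d → ℝ) = 0 := Matrix.mulVec_zero A
      rcases hA u hu hu0 with h | h
      · have heq : (fun i => c * (((A.mulVec u i : ℂ) + (A.mulVec 0 i : ℂ))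
            + Complex.I * ((A.mulVec u i : ℂ) - (A.mulVec 0 i : ℂ)))) =
            fun i => (c * (1 + Complex.I) / 2) * (((A.mulVec u i : ℂ) + (A.mulVec u i : ℂ))
            + Complex.I * ((A.mulVec u i : ℂ) - (A.mulVec u i : ℂ))) := by
          funext i; rw [hAv0]; simp only [Pi.zero_apply]; push_cast; ring
        rw [heq]
        exact key_interior K₂ _ (div_ne_zero (mul_ne_zero hc hI2) two_ne_zero) _ _ h h
      · have heq : (fun i => c * (((A.mulVec u i : ℂ) + (A.mulVec 0 i : ℂ))
            + Complex.I * ((A.mulVec u i : ℂ) - (A.mulVec 0 i : ℂ)))) =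
            fun i => (-(c * (1 + Complex.I)) / 2) * ((((-A.mulVec u) i : ℂ) + ((-A.mulVec u) i : ℂ))
            + Complex.I * (((-A.mulVec u) i : ℂ) - ((-A.mulVec u) i : ℂ))) := by
          funext i; rw [hAv0]; simp only [Pi.zero_apply, Pi.neg_apply]; push_cast; ring
        rw [heq]
        exact key_interior K₂ _ (div_ne_zero (neg_ne_zero.mpr (mul_ne_zero hc hI2)) two_ne_zero) _ _ h h
    · rcases hA u hu hu0 with h1 | h1 <;> rcases hA v hv hv0 with h2 | h2
      · exact key_interior K₂ c hc _ _ h1 h2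
      ·
        have heq : (fun i => c * (((A.mulVec u i : ℂ) + (A.mulVec v i : ℂ))
            + Complex.I * ((A.mulVec u i : ℂ) - (A.mulVec v i : ℂ)))) =
            fun i => (c * Complex.I) * ((((-A.mulVec v) i : ℂ) + (A.mulVec u i : ℂ))
            + Complex.I * (((-A.mulVec v) i : ℂ) - (A.mulVec u i : ℂ))) := by
          funext i; simp only [Pi.neg_apply]; push_cast
          linear_combination (c * ((A.mulVec u i : ℂ) + (A.mulVec v i : ℂ))) * Complex.I_sq
        rw [heq]
        exact key_interior K₂ _ (mul_ne_zero hc Complex.I_ne_zero) _ _ h2 h1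
      · have heq : (fun i => c * (((A.mulVec u i : ℂ) + (A.mulVec v i : ℂ))
            + Complex.I * ((A.mulVec u i : ℂ) - (A.mulVec v i : ℂ)))) =
            fun i => (-(c * Complex.I)) * ((((A.mulVec v) i : ℂ) + ((-A.mulVec u) i : ℂ))
            + Complex.I * (((A.mulVec v) i : ℂ) - ((-A.mulVec u) i : ℂ))) := by
          funext i; simp only [Pi.neg_apply]; push_cast
          linear_combination (c * ((A.mulVec u i : ℂ) + (A.mulVec v i : ℂ))) * Complex.I_sq
        rw [heq]
        exact key_interior K₂ _ (neg_ne_zero.mpr (mul_ne_zero hc Complex.I_ne_zero)) _ _ h2 h1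
      · have heq : (fun i => c * (((A.mulVec u i : ℂ) + (A.mulVec v i : ℂ))
            + Complex.I * ((A.mulVec u i : ℂ) - (A.mulVec v i : ℂ)))) =
            fun i => (-c) * ((((-A.mulVec u) i : ℂ) + ((-A.mulVec v) i : ℂ))
            + Complex.I * (((-A.mulVec u) i : ℂ) - ((-A.mulVec v) i : ℂ))) := by
          funext i; simp only [Pi.neg_apply]; push_cast; ring
        rw [heq]
        exact key_interior K₂ _ (neg_ne_zero.mpr hc) _ _ h1 h2
end
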